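/- Let ℓ : [0,∞) → (0,∞) be continuous and non-decreasing, and let f : ℝ^m → ℝ be twice continuously differentiable with ‖∇²f(x)‖ ≤ ℓ(‖∇f(x)‖) everywhere and f bounded below by f*. Then for every x, φ(‖∇f(x)‖) ≤ f(x) − f*, where φ(a) := a²/(2ℓ(2a)). -/

import Mathlib

open Set

theorem stmt4 {m : ℕ}
    (f : EuclideanSpace ℝ (Fin m) → ℝ) (fstar : ℝ)
    (hf : ContDiff ℝ 2 f)
    (hlower : ∀ x, fstar ≤ f x)
    (ℓ : ℝ → ℝ)
    (hℓpos : ∀ a, 0 ≤ a → 0 < ℓ a)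
    (hℓcont : ContinuousOn ℓ (Set.Ici 0))
    (hℓmono : MonotoneOn ℓ (Set.Ici 0))
    (hsmooth : ∀ x, ‖iteratedFDeriv ℝ 2 f x‖ ≤ ℓ ‖gradient f x‖) :
    ∀ x, ‖gradient f x‖^2 / (2 * ℓ (2 * ‖gradient f x‖)) ≤ f x - fstar := by
  have hgradnorm : ∀ y, ‖gradient f y‖ = ‖fderiv ℝ f y‖ := fun y => by
    rw [gradient]; exact LinearIsometryEquiv.norm_map _ _
  have hhess : ∀ y, ‖fderiv ℝ (fderiv ℝ f) y‖ = ‖iteratedFDeriv ℝ 2 f y‖ := fun y => by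
    calc ‖fderiv ℝ (fderiv ℝ f) y‖ = ‖iteratedFDeriv ℝ 0 (fderiv ℝ (fderiv ℝ f)) y‖ := by
          rw [norm_iteratedFDeriv_zero]
    _ = ‖iteratedFDeriv ℝ 1 (fderiv ℝ f) y‖ := norm_iteratedFDeriv_fderiv
    _ = ‖iteratedFDeriv ℝ 2 f y‖ := norm_iteratedFDeriv_fderiv
  have hdf : Differentiable ℝ (fderiv ℝ f) :=
    (hf.fderiv_right (m := 1) (by norm_num)).differentiable (by norm_num)
  have hfd : Differentiable ℝ f := hf.differentiable (by norm_num)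
  have hcontfd : Continuous (fderiv ℝ f) := hf.continuous_fderiv (by norm_num)
  intro x
  set g : EuclideanSpace ℝ (Fin m) := gradient f x with hg
  set a : ℝ := ‖g‖ with ha
  rcases eq_or_lt_of_le (norm_nonneg g) with h0 | h0
  · have haz : a = 0 := h0.symm
    rw [haz]
    simp only [zero_pow, ne_eq, OfNat.ofNat_ne_zero, not_false_eq_true, zero_div]
    linarith [hlower x]
  · -- main case a > 0
    have h0' : (0:ℝ) < a := h0
    set d : EuclideanSpace ℝ (Fin m) := a⁻¹ • g with hdd
    have hd : ‖d‖ = 1 := by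
      rw [hdd, norm_smul, norm_inv, Real.norm_eq_abs, abs_of_pos h0', ← ha]
      field_simp
    set L : ℝ := ℓ (2 * a) with hLdef
    have hL : 0 < L := hℓpos _ (by positivity)
    set S : ℝ := a / L with hSdef
    have hS : 0 < S := div_pos h0' hL
    set c : ℝ → EuclideanSpace ℝ (Fin m) := fun s => x - s • d with hc
    set ψ : ℝ → ℝ := fun s => ‖fderiv ℝ f (c s)‖ with hψdef
    have hccont : Continuous c :=
      continuous_const.sub (continuous_id.smul continuous_const)
    have hψcont : Continuous ψ := continuous_norm.comp (hcontfd.comp hccont)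
    have hc0 : c 0 = x := by simp [hc]
    have hfdx : ‖fderiv ℝ f x‖ = a := by rw [← hgradnorm, ← hg]
    have hψ0 : ψ 0 = a := by rw [hψdef]; simp only [hc0]; exact hfdx
    -- KEY mean-value estimate
    have KEY : ∀ t ∈ Icc 0 S, (∀ u ∈ Icc 0 t, ψ u ≤ 2 * a) →
        ∀ u ∈ Icc 0 t, ‖fderiv ℝ f (c u) - fderiv ℝ f x‖ ≤ L * u := by
      intro t ht hψle u hu
      have hseg : ∀ y ∈ segment ℝ x (c u), ∃ v, v ∈ Icc 0 u ∧ y = c v := by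
        intro y hy
        rw [segment_eq_image'] at hy
        obtain ⟨θ, hθ, rfl⟩ := hy
        refine ⟨θ * u, ⟨mul_nonneg hθ.1 hu.1, ?_⟩, ?_⟩
        · calc θ * u ≤ 1 * u := mul_le_mul_of_nonneg_right hθ.2 hu.1
          _ = u := one_mul u
        · rw [hc]; simp only; module
      have bound : ∀ y ∈ segment ℝ x (c u), ‖fderiv ℝ (fderiv ℝ f) y‖ ≤ L := by
        intro y hy
        obtain ⟨v, hv, rfl⟩ := hseg y hy
        have h1 : ψ v ≤ 2 * a := hψle v ⟨hv.1, hv.2.trans hu.2⟩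
        have h2 : ℓ (ψ v) ≤ L := by
          rw [hLdef]
          exact hℓmono (mem_Ici.mpr (norm_nonneg _)) (mem_Ici.mpr (by positivity)) h1
        calc ‖fderiv ℝ (fderiv ℝ f) (c v)‖ = ‖iteratedFDeriv ℝ 2 f (c v)‖ := hhess _
        _ ≤ ℓ ‖gradient f (c v)‖ := hsmooth _
        _ = ℓ (ψ v) := by rw [hgradnorm]
        _ ≤ L := h2
      have := Convex.norm_image_sub_le_of_norm_fderiv_le
        (f := fderiv ℝ f) (fun y _ => hdf y) bound (convex_segment _ _)
        (left_mem_segment ℝ x (c u)) (right_mem_segment ℝ x (c u))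
      have hnorm : ‖c u - x‖ = u := by
        rw [hc]; simp only [sub_sub_cancel_left, norm_neg, norm_smul, hd,
          Real.norm_eq_abs, abs_of_nonneg hu.1, mul_one]
      rwa [hnorm] at this
    -- bootstrap: ψ ≤ 2a on [0, S]
    have PSI : ∀ s ∈ Icc 0 S, ψ s ≤ 2 * a := by
      set B : Set ℝ := Icc 0 S ∩ {s | 2 * a ≤ ψ s} with hB
      by_cases hBne : B.Nonempty
      · have hBclosed : IsClosed B :=
          isClosed_Icc.inter (isClosed_le continuous_const hψcont)
        have hBbdd : BddBelow B := ⟨0, fun s hs => hs.1.1⟩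
        set s₀ : ℝ := sInf B with hs₀def
        have hs₀B : s₀ ∈ B := hBclosed.csInf_mem hBne hBbdd
        have h0B : (0:ℝ) ∉ B := by
          intro h
          have := h.2
          rw [mem_setOf_eq, hψ0] at this
          linarith
        have hs₀pos : 0 < s₀ := by
          rcases hs₀B.1.1.lt_or_eq with h | h
          · exact h
          · exact absurd (h ▸ hs₀B) h0B
        have hlt : ∀ u ∈ Ico 0 s₀, ψ u < 2 * a := by
          intro u hu
          by_contra h
          push_neg at h
          have huB : u ∈ B := ⟨⟨hu.1, hu.2.le.trans hs₀B.1.2⟩, h⟩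
          exact absurd (csInf_le hBbdd huB) (not_le.mpr hu.2)
        have hψs₀ : ψ s₀ ≤ 2 * a := by
          have htend : Filter.Tendsto ψ (nhdsWithin s₀ (Iio s₀)) (nhds (ψ s₀)) :=
            (hψcont.continuousAt).mono_left nhdsWithin_le_nhds
          refine le_of_tendsto htend ?_
          filter_upwards [Ioo_mem_nhdsLT_of_mem (by constructor <;> linarith : s₀ ∈ Ioc 0 s₀)]
            with u hu
          exact (hlt u ⟨hu.1.le, hu.2⟩).le
        have hle : ∀ u ∈ Icc 0 s₀, ψ u ≤ 2 * a := by
          intro u hu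
          rcases hu.2.lt_or_eq with h | h
          · exact (hlt u ⟨hu.1, h⟩).le
          · rw [h]; exact hψs₀
        have hest := KEY s₀ hs₀B.1 hle s₀ ⟨hs₀pos.le, le_refl _⟩
        have hψup : ψ s₀ ≤ a + L * s₀ := by
          calc ψ s₀ = ‖fderiv ℝ f (c s₀)‖ := rfl
          _ ≤ ‖fderiv ℝ f x‖ + ‖fderiv ℝ f (c s₀) - fderiv ℝ f x‖ := by
              have := norm_sub_norm_le (fderiv ℝ f (c s₀)) (fderiv ℝ f x)
              linarith [norm_sub_norm_le (fderiv ℝ f (c s₀)) (fderiv ℝ f x)]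
          _ ≤ a + L * s₀ := by rw [hfdx]; linarith
        have h2a : 2 * a ≤ ψ s₀ := hs₀B.2
        have haLs : a ≤ L * s₀ := by linarith
        have hSs₀ : S ≤ s₀ := by
          rw [hSdef, div_le_iff₀ hL]
          linarith [mul_comm L s₀]
        have hs₀S : s₀ = S := le_antisymm hs₀B.1.2 hSs₀
        intro s hs
        exact hle s (hs₀S ▸ hs)
      · intro s hs
        by_contra h
        push_neg at h
        exact hBne ⟨s, hs, h.le⟩
    have GRAD := KEY S ⟨hS.le, le_refl _⟩ PSI
    -- directional derivative of f at x in direction d equals a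
    have hfxd : fderiv ℝ f x d = a := by
      have hgd : fderiv ℝ f x = InnerProductSpace.toDual ℝ _ (gradient f x) := by
        rw [gradient]
        simp
      rw [hgd, InnerProductSpace.toDual_apply_apply, ← hg, hdd]
      rw [real_inner_smul_right, real_inner_self_eq_norm_sq, ← ha]
      field_simp
    -- derivative of the path value
    have hderiv : ∀ s : ℝ, HasDerivAt (fun s => f (c s)) (fderiv ℝ f (c s) (-d)) s := by
      intro s
      have hcder : HasDerivAt c (-d) s := by
        have h1 : HasDerivAt (fun s : ℝ => s • d) d s := by
          simpa using (hasDerivAt_id s).smul_const d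
        simpa using h1.const_sub x
      exact (hfd (c s)).hasFDerivAt.comp_hasDerivAt s hcder
    set F : ℝ → ℝ := fun s => f (c s) + a * s - L * s^2 / 2 with hF
    have hFder : ∀ s : ℝ, HasDerivAt F (fderiv ℝ f (c s) (-d) + a - L * s) s := by
      intro s
      have h2 : HasDerivAt (fun s : ℝ => a * s) a s := by
        simpa using (hasDerivAt_id s).const_mul a
      have h3 : HasDerivAt (fun s : ℝ => L * s^2 / 2) (L * s) s := by
        have := ((hasDerivAt_pow 2 s).const_mul L).div_const 2
        convert this using 1
        · rfl
        · rfl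
        ring
      exact ((hderiv s).add h2).sub h3
    have hFdiff : Differentiable ℝ F := fun s => (hFder s).differentiableAt
    have hF'le : ∀ s ∈ interior (Icc (0:ℝ) S), deriv F s ≤ 0 := by
      intro s hs
      rw [interior_Icc] at hs
      rw [(hFder s).deriv]
      have hb := GRAD s ⟨hs.1.le, hs.2.le⟩
      have h1 : fderiv ℝ f (c s) (-d) ≤ -a + L * s := by
        have heq : fderiv ℝ f (c s) (-d)
            = fderiv ℝ f x (-d) + (fderiv ℝ f (c s) - fderiv ℝ f x) (-d) := by
          simp [ContinuousLinearMap.sub_apply]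
        have h2 : fderiv ℝ f x (-d) = -a := by
          rw [map_neg, hfxd]
        have h3 : (fderiv ℝ f (c s) - fderiv ℝ f x) (-d) ≤ L * s := by
          calc (fderiv ℝ f (c s) - fderiv ℝ f x) (-d)
              ≤ ‖(fderiv ℝ f (c s) - fderiv ℝ f x) (-d)‖ := le_abs_self _
          _ ≤ ‖fderiv ℝ f (c s) - fderiv ℝ f x‖ * ‖-d‖ :=
              (fderiv ℝ f (c s) - fderiv ℝ f x).le_opNorm _
          _ = ‖fderiv ℝ f (c s) - fderiv ℝ f x‖ := by rw [norm_neg, hd, mul_one]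
          _ ≤ L * s := hb
        rw [heq, h2]
        linarith
      have hbLs : L * s ≤ a := by
        have := hs.2
        rw [hSdef, lt_div_iff₀ hL] at this
        linarith [mul_comm s L]
      linarith
    have hanti : AntitoneOn F (Icc 0 S) :=
      antitoneOn_of_deriv_nonpos (convex_Icc 0 S) hFdiff.continuous.continuousOn
        (hFdiff.differentiableOn) hF'le
    have hFS : F S ≤ F 0 := hanti ⟨le_refl 0, hS.le⟩ ⟨hS.le, le_refl S⟩ hS.le
    have hF0 : F 0 = f x := by
      rw [hF]; simp [hc0]
    have harith : a * S - L * S^2 / 2 = a^2 / (2 * L) := by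
      rw [hSdef]; field_simp; ring
    have hFSval : F S = f (c S) + a^2 / (2 * L) := by
      rw [hF]; simp only; linarith [harith]
    have hfinal : f (c S) + a^2 / (2 * L) ≤ f x := by
      rw [← hFSval, ← hF0]; exact hFS
    have hlow := hlower (c S)
    show a^2 / (2 * L) ≤ f x - fstar
    linarith
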